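/- Let κ be an infinite field and let f ∈ κ[x,y,z] be invariant of weight (1,−1,0). Then for every commutative κ-algebra A and all tuples a ∈ A^{d₁}, b ∈ A^{d₂}, c ∈ A^{d₃}, one has f(a, 0, c) = f(0, 0, c) and f(0, b, c) = f(0, 0, c). Equivalently, substituting y = 0 into f yields a polynomial in which no x-variable occurs, and substituting x = 0 yields a polynomial in which no y-variable occurs. -/

import Mathlib

open MvPolynomial

universe u

/-- The κ-algebra endomorphism `σ_τ` of `κ[x,y,z]` determined by
`x_i ↦ τ·x_i`, `y_j ↦ τ⁻¹·y_j`, `z_l ↦ z_l`. -/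
noncomputable def weightScaling {κ : Type*} [Field κ] (d₁ d₂ d₃ : ℕ) (τ : κˣ) :
    MvPolynomial (Fin d₁ ⊕ Fin d₂ ⊕ Fin d₃) κ →ₐ[κ]
      MvPolynomial (Fin d₁ ⊕ Fin d₂ ⊕ Fin d₃) κ :=
  MvPolynomial.aeval
    (Sum.elim (fun i => MvPolynomial.C (τ : κ) * MvPolynomial.X (Sum.inl i))
      (Sum.elim
        (fun j => MvPolynomial.C ((τ⁻¹ : κˣ) : κ) * MvPolynomial.X (Sum.inr (Sum.inl j)))
        (fun l => MvPolynomial.X (Sum.inr (Sum.inr l)))))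

/-- Coefficient of a diagonal scaling substitution. -/
lemma coeff_aeval_scale {κ : Type*} [CommRing κ] {σ : Type*} [Fintype σ] [DecidableEq σ]
    (s : σ → κ) (f : MvPolynomial σ κ) (d : σ →₀ ℕ) :
    MvPolynomial.coeff d (MvPolynomial.aeval (fun i => MvPolynomial.C (s i) * MvPolynomial.X i) f)
      = (∏ i, s i ^ d i) * MvPolynomial.coeff d f := by
  have hmon : ∀ d' : σ →₀ ℕ, ∀ c : κ,
      (MvPolynomial.aeval (fun i => MvPolynomial.C (s i) * MvPolynomial.X i))
        (MvPolynomial.monomial d' c)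
      = MvPolynomial.monomial d' ((∏ i, s i ^ d' i) * c) := by
    intro d' c
    rw [MvPolynomial.aeval_monomial]
    rw [Finsupp.prod_fintype _ _ (fun i => pow_zero _)]
    have : ∀ i : σ, (MvPolynomial.C (s i) * MvPolynomial.X i) ^ d' i
        = MvPolynomial.C (s i ^ d' i) * MvPolynomial.X i ^ d' i := by
      intro i; rw [mul_pow, MvPolynomial.C_pow]
    rw [Finset.prod_congr rfl fun i _ => this i, Finset.prod_mul_distrib, ← map_prod]
    rw [MvPolynomial.algebraMap_eq]
    have hm : (MvPolynomial.monomial d') (1 : κ) = ∏ i : σ, MvPolynomial.X i ^ d' i := by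
      rw [MvPolynomial.monomial_eq, MvPolynomial.C_1, one_mul,
        Finsupp.prod_fintype _ _ (fun i => pow_zero _)]
    rw [← hm, MvPolynomial.C_mul_monomial, MvPolynomial.C_mul_monomial, mul_one, mul_comm c]
  conv_lhs => rw [f.as_sum]
  rw [map_sum]
  simp only [hmon]
  rw [MvPolynomial.coeff_sum]
  simp only [MvPolynomial.coeff_monomial]
  rw [Finset.sum_eq_single d]
  · simp
  · intro b _ hb; simp [hb]
  · intro hd
    rw [MvPolynomial.notMem_support_iff] at hd
    simp [hd]

/-- In an infinite field, equal power functions force equal exponents. -/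
lemma pow_exponent_eq {κ : Type*} [Field κ] [Infinite κ] (A B : ℕ)
    (h : ∀ τ : κ, τ ≠ 0 → τ ^ A = τ ^ B) : A = B := by
  classical
  have main : ∀ A B : ℕ, B < A → (∀ τ : κ, τ ≠ 0 → τ ^ A = τ ^ B) → False := by
    intro A B hBA h
    set n := A - B with hn
    have hn0 : n ≠ 0 := Nat.sub_ne_zero_of_lt hBA
    have hpoly : (Polynomial.X ^ n - Polynomial.C 1 : Polynomial κ) ≠ 0 := by
      intro hc
      have := congrArg Polynomial.natDegree hc
      rw [Polynomial.natDegree_X_pow_sub_C] at this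
      simp [hn0] at this
    obtain ⟨τ, hτ⟩ := Infinite.exists_notMem_finset
      ((Polynomial.X ^ n - Polynomial.C 1 : Polynomial κ).roots.toFinset ∪ {0})
    simp only [Finset.mem_union, Finset.mem_singleton, Multiset.mem_toFinset,
      not_or] at hτ
    obtain ⟨hroot, hτ0⟩ := hτ
    rw [Polynomial.mem_roots hpoly] at hroot
    have heval : Polynomial.IsRoot (Polynomial.X ^ n - Polynomial.C 1) τ := by
      have h1 : τ ^ n = 1 := by
        have hA : τ ^ A = τ ^ B * τ ^ n := by
          rw [← pow_add]; congr 1; omega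
        have hh := h τ hτ0
        rw [hA] at hh
        have hB : τ ^ B ≠ 0 := pow_ne_zero _ hτ0
        calc τ ^ n = (τ ^ B)⁻¹ * (τ ^ B * τ ^ n) := by field_simp
          _ = (τ ^ B)⁻¹ * τ ^ B := by rw [hh]
          _ = 1 := inv_mul_cancel₀ hB
      simp [Polynomial.IsRoot, h1]
    exact hroot heval
  rcases lt_trichotomy A B with hlt | heq | hgt
  · exact absurd (fun τ hτ => (h τ hτ).symm) (fun hh => main B A hlt hh)
  · exact heq
  · exact absurd h (fun hh => main A B hgt hh)


lemma eval_main_aux {κ : Type*} [Field κ] {d₁ d₂ d₃ : ℕ}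
    (f : MvPolynomial (Fin d₁ ⊕ Fin d₂ ⊕ Fin d₃) κ)
    (key : ∀ d ∈ f.support,
      (∑ i, d (Sum.inl i)) = ∑ j, d (Sum.inr (Sum.inl j)))
    {A : Type*} [CommRing A] [Algebra κ A]
    (a : Fin d₁ → A) (b : Fin d₂ → A) (c : Fin d₃ → A) :
    MvPolynomial.aeval (Sum.elim a (Sum.elim 0 c)) f =
        MvPolynomial.aeval (Sum.elim 0 (Sum.elim (0 : Fin d₂ → A) c)) f ∧
      MvPolynomial.aeval (Sum.elim 0 (Sum.elim b c)) f =
        MvPolynomial.aeval (Sum.elim (0 : Fin d₁ → A) (Sum.elim 0 c)) f := by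
  classical
  constructor
  · rw [MvPolynomial.aeval_def, MvPolynomial.eval₂_eq', MvPolynomial.aeval_def,
      MvPolynomial.eval₂_eq']
    apply Finset.sum_congr rfl
    intro d hd
    congr 1
    simp only [Fintype.prod_sum_type, Sum.elim_inl, Sum.elim_inr, Pi.zero_apply]
    by_cases hB : ∀ j, d (Sum.inr (Sum.inl j)) = 0
    · have hA : ∀ i, d (Sum.inl i) = 0 := by
        have h0 : (∑ i, d (Sum.inl i)) = 0 := by
          rw [key d hd]; exact Finset.sum_eq_zero fun j _ => hB j
        intro i
        exact (Finset.sum_eq_zero_iff.mp h0) i (Finset.mem_univ i)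
      simp [hA, hB]
    · push_neg at hB
      obtain ⟨j, hj⟩ := hB
      have hz : (∏ j : Fin d₂, (0 : A) ^ d (Sum.inr (Sum.inl j))) = 0 :=
        Finset.prod_eq_zero (Finset.mem_univ j) (zero_pow hj)
      rw [hz]
      ring
  · rw [MvPolynomial.aeval_def, MvPolynomial.eval₂_eq', MvPolynomial.aeval_def,
      MvPolynomial.eval₂_eq']
    apply Finset.sum_congr rfl
    intro d hd
    congr 1
    simp only [Fintype.prod_sum_type, Sum.elim_inl, Sum.elim_inr, Pi.zero_apply]
    by_cases hA : ∀ i, d (Sum.inl i) = 0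
    · have hB : ∀ j, d (Sum.inr (Sum.inl j)) = 0 := by
        have h0 : (∑ j, d (Sum.inr (Sum.inl j))) = 0 := by
          rw [← key d hd]; exact Finset.sum_eq_zero fun i _ => hA i
        intro j
        exact (Finset.sum_eq_zero_iff.mp h0) j (Finset.mem_univ j)
      simp [hA, hB]
    · push_neg at hA
      obtain ⟨i, hi⟩ := hA
      have hz : (∏ i : Fin d₁, (0 : A) ^ d (Sum.inl i)) = 0 :=
        Finset.prod_eq_zero (Finset.mem_univ i) (zero_pow hi)
      rw [hz]
      ring

theorem eval_at_zero_of_weight_invariant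
    {κ : Type*} [Field κ] [Infinite κ] (d₁ d₂ d₃ : ℕ)
    (f : MvPolynomial (Fin d₁ ⊕ Fin d₂ ⊕ Fin d₃) κ)
    (hf : ∀ τ : κˣ, weightScaling d₁ d₂ d₃ τ f = f) :
    (∀ (A : Type u) [CommRing A] [Algebra κ A]
        (a : Fin d₁ → A) (b : Fin d₂ → A) (c : Fin d₃ → A),
        MvPolynomial.aeval (Sum.elim a (Sum.elim 0 c)) f =
            MvPolynomial.aeval (Sum.elim 0 (Sum.elim (0 : Fin d₂ → A) c)) f ∧
          MvPolynomial.aeval (Sum.elim 0 (Sum.elim b c)) f =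
            MvPolynomial.aeval (Sum.elim (0 : Fin d₁ → A) (Sum.elim 0 c)) f) ∧
      (∀ i : Fin d₁, Sum.inl i ∉
        (MvPolynomial.aeval
          (Sum.elim (fun i => MvPolynomial.X (Sum.inl i) :
              Fin d₁ → MvPolynomial (Fin d₁ ⊕ Fin d₂ ⊕ Fin d₃) κ)
            (Sum.elim (fun _ => 0)
              (fun l => MvPolynomial.X (Sum.inr (Sum.inr l))))) f).vars) ∧
      (∀ j : Fin d₂, Sum.inr (Sum.inl j) ∉
        (MvPolynomial.aeval
          (Sum.elim (fun _ => 0 :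
              Fin d₁ → MvPolynomial (Fin d₁ ⊕ Fin d₂ ⊕ Fin d₃) κ)
            (Sum.elim (fun j => MvPolynomial.X (Sum.inr (Sum.inl j)))
              (fun l => MvPolynomial.X (Sum.inr (Sum.inr l))))) f).vars) := by
  classical
  -- the key combinatorial fact about the support of f
  have key : ∀ d ∈ f.support,
      (∑ i, d (Sum.inl i)) = ∑ j, d (Sum.inr (Sum.inl j)) := by
    intro d hd
    set A := ∑ i, d (Sum.inl i) with hA
    set B := ∑ j, d (Sum.inr (Sum.inl j)) with hB
    apply pow_exponent_eq (κ := κ)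
    intro t ht0
    set τ : κˣ := Units.mk0 t ht0 with hτ
    set s : (Fin d₁ ⊕ Fin d₂ ⊕ Fin d₃) → κ :=
      Sum.elim (fun _ => (τ : κ)) (Sum.elim (fun _ => ((τ⁻¹ : κˣ) : κ)) (fun _ => 1)) with hs
    have hws : weightScaling d₁ d₂ d₃ τ f
        = MvPolynomial.aeval (fun i => MvPolynomial.C (s i) * MvPolynomial.X i) f := by
      have hfun : (Sum.elim (fun i => MvPolynomial.C (τ : κ) * MvPolynomial.X (Sum.inl i))
          (Sum.elim
            (fun j => MvPolynomial.C ((τ⁻¹ : κˣ) : κ) * MvPolynomial.X (Sum.inr (Sum.inl j)))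
            (fun l => MvPolynomial.X (Sum.inr (Sum.inr l)))))
          = fun i => MvPolynomial.C (s i) * MvPolynomial.X i := by
        funext i
        rcases i with i | j | l <;> simp [hs]
      unfold weightScaling
      rw [hfun]
    have hcoeff := coeff_aeval_scale s f d
    rw [← hws, hf τ] at hcoeff
    have hprod : (∏ i, s i ^ d i) = t ^ A * (t⁻¹) ^ B := by
      rw [Fintype.prod_sum_type, Fintype.prod_sum_type]
      simp only [hs, Sum.elim_inl, Sum.elim_inr, one_pow, Finset.prod_const_one, mul_one]
      rw [Finset.prod_pow_eq_pow_sum, Finset.prod_pow_eq_pow_sum]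
      simp [hτ, hA, hB]
    have hne : MvPolynomial.coeff d f ≠ 0 := MvPolynomial.mem_support_iff.mp hd
    rw [hprod] at hcoeff
    have h1 : t ^ A * (t⁻¹) ^ B = 1 :=
      mul_right_cancel₀ hne (by rw [← hcoeff, one_mul])
    have h2 : t ^ A * ((t⁻¹) ^ B * t ^ B) = 1 * t ^ B := by
      rw [← mul_assoc, h1]
    rwa [← mul_pow, inv_mul_cancel₀ ht0, one_pow, mul_one, one_mul] at h2
  refine ⟨fun A _ _ a b c => eval_main_aux f key a b c, ?_, ?_⟩
  · intro i hi
    have hgoal : MvPolynomial.aeval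
        (Sum.elim (fun i => MvPolynomial.X (Sum.inl i) :
            Fin d₁ → MvPolynomial (Fin d₁ ⊕ Fin d₂ ⊕ Fin d₃) κ)
          (Sum.elim (fun _ => 0)
            (fun l => MvPolynomial.X (Sum.inr (Sum.inr l))))) f
        = MvPolynomial.aeval
            (Sum.elim (0 : Fin d₁ → MvPolynomial (Fin d₁ ⊕ Fin d₂ ⊕ Fin d₃) κ)
              (Sum.elim (0 : Fin d₂ → MvPolynomial (Fin d₁ ⊕ Fin d₂ ⊕ Fin d₃) κ)
                (fun l => MvPolynomial.X (Sum.inr (Sum.inr l))))) f :=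
      (eval_main_aux f key (fun i => MvPolynomial.X (Sum.inl i))
        (fun j => MvPolynomial.X (Sum.inr (Sum.inl j)))
        (fun l => MvPolynomial.X (Sum.inr (Sum.inr l)))).1
    rw [hgoal, MvPolynomial.aeval_eq_bind₁] at hi
    obtain ⟨k, -, hk⟩ := MvPolynomial.mem_vars_bind₁ _ _ hi
    rcases k with k | k | k <;> simp at hk
  · intro j hj
    have hgoal : MvPolynomial.aeval
        (Sum.elim (fun _ => 0 :
            Fin d₁ → MvPolynomial (Fin d₁ ⊕ Fin d₂ ⊕ Fin d₃) κ)
          (Sum.elim (fun j => MvPolynomial.X (Sum.inr (Sum.inl j)))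
            (fun l => MvPolynomial.X (Sum.inr (Sum.inr l))))) f
        = MvPolynomial.aeval
            (Sum.elim (0 : Fin d₁ → MvPolynomial (Fin d₁ ⊕ Fin d₂ ⊕ Fin d₃) κ)
              (Sum.elim (0 : Fin d₂ → MvPolynomial (Fin d₁ ⊕ Fin d₂ ⊕ Fin d₃) κ)
                (fun l => MvPolynomial.X (Sum.inr (Sum.inr l))))) f :=
      (eval_main_aux f key (fun i => MvPolynomial.X (Sum.inl i))
        (fun j => MvPolynomial.X (Sum.inr (Sum.inl j)))
        (fun l => MvPolynomial.X (Sum.inr (Sum.inr l)))).2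
    rw [hgoal, MvPolynomial.aeval_eq_bind₁] at hj
    obtain ⟨k, -, hk⟩ := MvPolynomial.mem_vars_bind₁ _ _ hj
    rcases k with k | k | k <;> simp at hk
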